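/- Let K be a power of 2, M ≥ 1, and let π_k = exp(i·2πk/K) for k ∈ {1,…,K}. Let a : {1,…,M}×{1,…,K} → ℝ, and define the softmax weights p_{j,k} = e^{a_{j,k}} / Σ_{j'=1}^M Σ_{k'=1}^K e^{a_{j',k'}}. Fix j₀ ∈ {1,…,M}, and suppose there exists (j*,k*) ≠ (j₀,K) with a_{j₀,K} ≤ a_{j*,k*}. Then |Σ_{k=1}^K π_k·p_{j₀,k} − 1|² ≥ h(K), where h(K) = 1/4 for K ∈ {1,2,4} and h(K) = sin⁴(π/K) for K ≥ 8. -/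

import Mathlib

open Finset

noncomputable section

/-- The `k`-th symbol of the K-PSK constellation, `π_k = exp(i·2πk/K)`. -/
def psk (K k : ℕ) : ℂ := Complex.exp (2 * (Real.pi : ℂ) * Complex.I * (k : ℂ) / (K : ℂ))

lemma psk_re (K k : ℕ) : (psk K k).re = Real.cos (2 * Real.pi * k / K) := by
  have h : (2 * (Real.pi : ℂ) * Complex.I * (k : ℂ) / (K : ℂ))
      = ((2 * Real.pi * k / K : ℝ) : ℂ) * Complex.I := by
    push_cast; ring
  rw [psk, h, Complex.exp_ofReal_mul_I_re]

lemma psk_top (K : ℕ) (hK : K ≠ 0) : psk K K = 1 := by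
  have hK' : (K : ℂ) ≠ 0 := Nat.cast_ne_zero.mpr hK
  have h : (2 * (Real.pi : ℂ) * Complex.I * (K : ℂ) / (K : ℂ)) = 2 * Real.pi * Complex.I := by
    field_simp
  rw [psk, h, Complex.exp_two_pi_mul_I]

lemma cos_aux (K k : ℕ) (hk1 : 1 ≤ k) (h2k : 2 * k ≤ K) :
    Real.cos (2 * Real.pi * k / K) ≤ Real.cos (2 * Real.pi / K) := by
  have hK0 : (0:ℝ) < K := by
    have : 0 < K := by omega
    exact_mod_cast this
  have hπ := Real.pi_pos
  have hk : (1:ℝ) ≤ k := by exact_mod_cast hk1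
  have h2k' : 2 * (k:ℝ) ≤ K := by exact_mod_cast h2k
  refine Real.cos_le_cos_of_nonneg_of_le_pi (by positivity) ?_ ?_
  · rw [div_le_iff₀ hK0]; nlinarith
  · rw [div_le_div_iff₀ hK0 hK0]
    nlinarith [mul_nonneg (mul_nonneg hπ.le (sub_nonneg.mpr hk)) hK0.le]

lemma key (K : ℕ) (hK1 : 1 ≤ K) (M : ℕ) (hM : 1 ≤ M) (a : Fin M → ℕ → ℝ) (j0 : Fin M)
    (p : Fin M → ℕ → ℝ)
    (hp : ∀ j k, p j k =
      Real.exp (a j k) / ∑ j' : Fin M, ∑ k' ∈ Finset.Icc 1 K, Real.exp (a j' k'))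
    (hdom : ∃ js : Fin M, ∃ ks ∈ Finset.Icc 1 K,
      (js, ks) ≠ (j0, K) ∧ a j0 K ≤ a js ks)
    (c : ℝ) (hc0 : 0 ≤ c) (hc1 : c ≤ 1)
    (hre : ∀ k ∈ Finset.Icc 1 K, k ≠ K → (psk K k).re ≤ c) :
    ((1 - c) / 2) ^ 2
      ≤ ‖(∑ k ∈ Finset.Icc 1 K, psk K k * (p j0 k : ℂ)) - 1‖ ^ 2 := by
  obtain ⟨js, ks, hks, hne, hle⟩ := hdom
  haveI : Nonempty (Fin M) := ⟨⟨0, hM⟩⟩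
  set D : ℝ := ∑ j' : Fin M, ∑ k' ∈ Finset.Icc 1 K, Real.exp (a j' k') with hD_def
  have hIcc : (Finset.Icc 1 K).Nonempty := ⟨K, Finset.mem_Icc.mpr ⟨hK1, le_refl K⟩⟩
  have hD : 0 < D := by
    apply Finset.sum_pos (fun j _ => Finset.sum_pos (fun k _ => Real.exp_pos _) hIcc)
      Finset.univ_nonempty
  have hppos : ∀ j k, 0 < p j k := fun j k => by
    rw [hp]; exact div_pos (Real.exp_pos _) hD
  have hKmem : K ∈ Finset.Icc 1 K := Finset.mem_Icc.mpr ⟨hK1, le_refl K⟩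
  -- q ≤ 1/2
  have hpair : Real.exp (a j0 K) + Real.exp (a js ks) ≤ D := by
    have hDprod : D = ∑ x ∈ Finset.univ ×ˢ Finset.Icc 1 K, Real.exp (a x.1 x.2) := by
      rw [hD_def, Finset.sum_product]
    have hsub : ({(j0, K), (js, ks)} : Finset (Fin M × ℕ)) ⊆ Finset.univ ×ˢ Finset.Icc 1 K := by
      intro x hx
      simp only [Finset.mem_insert, Finset.mem_singleton] at hx
      rcases hx with rfl | rfl <;> simp [Finset.mem_product, hKmem, hks]
    have := Finset.sum_le_sum_of_subset_of_nonneg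
      (f := fun x : Fin M × ℕ => Real.exp (a x.1 x.2)) hsub
      (fun x _ _ => (Real.exp_pos _).le)
    rw [Finset.sum_pair (Ne.symm hne)] at this
    rw [hDprod]; exact this
  have hq : p j0 K ≤ 1 / 2 := by
    have hexp : Real.exp (a j0 K) ≤ Real.exp (a js ks) := Real.exp_le_exp.mpr hle
    rw [hp, div_le_iff₀ hD]
    nlinarith
  have hq0 : 0 < p j0 K := hppos j0 K
  -- row sum ≤ 1
  have hrow : ∑ k ∈ Finset.Icc 1 K, p j0 k ≤ 1 := by
    have h1 : ∑ k ∈ Finset.Icc 1 K, p j0 k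
        = (∑ k ∈ Finset.Icc 1 K, Real.exp (a j0 k)) / D := by
      rw [Finset.sum_div]; exact Finset.sum_congr rfl fun k _ => hp j0 k
    have h2 : ∑ k ∈ Finset.Icc 1 K, Real.exp (a j0 k) ≤ D := by
      rw [hD_def]
      exact Finset.single_le_sum
        (f := fun j => ∑ k ∈ Finset.Icc 1 K, Real.exp (a j k))
        (fun j _ => Finset.sum_nonneg fun k _ => (Real.exp_pos _).le) (Finset.mem_univ j0)
    rw [h1, div_le_one hD]; exact h2
  -- real part computation
  set S : ℂ := (∑ k ∈ Finset.Icc 1 K, psk K k * (p j0 k : ℂ)) with hS_def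
  have hSre : S.re = ∑ k ∈ Finset.Icc 1 K, (psk K k).re * p j0 k := by
    rw [hS_def, Complex.re_sum]
    exact Finset.sum_congr rfl fun k _ => by
      simp [Complex.mul_re]
  obtain ⟨n, rfl⟩ : ∃ n, K = n + 1 := ⟨K - 1, (Nat.succ_pred_eq_of_pos hK1).symm⟩
  have hsplit : ∀ f : ℕ → ℝ, ∑ k ∈ Finset.Icc 1 (n+1), f k
      = (∑ k ∈ Finset.Icc 1 n, f k) + f (n+1) := fun f =>
    Finset.sum_Icc_succ_top (Nat.one_le_iff_ne_zero.mpr (Nat.succ_ne_zero n)) f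
  have htail_nonneg : 0 ≤ ∑ k ∈ Finset.Icc 1 n, p j0 k :=
    Finset.sum_nonneg fun k _ => (hppos j0 k).le
  have htail_le : ∑ k ∈ Finset.Icc 1 n, p j0 k ≤ 1 - p j0 (n+1) := by
    have := hsplit (p j0); linarith [hrow, this.symm.le, this.le]
  have htailre : ∑ k ∈ Finset.Icc 1 n, (psk (n+1) k).re * p j0 k
      ≤ c * ∑ k ∈ Finset.Icc 1 n, p j0 k := by
    rw [Finset.mul_sum]
    apply Finset.sum_le_sum
    intro k hk
    have hk' : k ∈ Finset.Icc 1 (n+1) := by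
      rw [Finset.mem_Icc] at hk ⊢; exact ⟨hk.1, hk.2.trans (Nat.le_succ n)⟩
    have hkne : k ≠ n + 1 := by
      rw [Finset.mem_Icc] at hk; omega
    exact mul_le_mul_of_nonneg_right (hre k hk' hkne) (hppos j0 k).le
  have hSre_le : S.re ≤ c * (1 - p j0 (n+1)) + p j0 (n+1) := by
    rw [hSre, hsplit (fun k => (psk (n+1) k).re * p j0 k)]
    have htop : (psk (n+1) (n+1)).re = 1 := by
      rw [psk_top (n+1) (Nat.succ_ne_zero n)]; simp
    rw [htop, one_mul]
    have h1 : c * ∑ k ∈ Finset.Icc 1 n, p j0 k ≤ c * (1 - p j0 (n+1)) :=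
      mul_le_mul_of_nonneg_left htail_le hc0
    linarith
  -- conclude
  have hmain : (1 - c) / 2 ≤ 1 - S.re := by nlinarith
  have h0 : 0 ≤ (1 - c) / 2 := by linarith
  have h1 : ((1 - c) / 2) ^ 2 ≤ (1 - S.re) ^ 2 := by nlinarith
  have h2 : (1 - S.re) ^ 2 = ((S - 1).re) ^ 2 := by
    rw [Complex.sub_re, Complex.one_re]; ring
  have h3 : ((S - 1).re) ^ 2 ≤ ‖S - 1‖ ^ 2 := by
    rw [Complex.sq_norm, Complex.normSq_apply]
    nlinarith [sq_nonneg (S - 1).im]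
  calc ((1 - c) / 2) ^ 2 ≤ (1 - S.re) ^ 2 := h1
    _ = ((S - 1).re) ^ 2 := h2
    _ ≤ ‖S - 1‖ ^ 2 := h3

/-- **Softmax posterior-mean error bound.** Let `K` be a power of 2, `M ≥ 1`, and let
`p_{j,k}` be the softmax weights of scores `a_{j,k}`, `(j,k) ∈ {1,…,M}×{1,…,K}`. If the
transmitted pair `(j₀, K)` (symbol `π_K = 1`) does not strictly dominate all other pairs,
i.e. `a_{j₀,K} ≤ a_{j*,k*}` for some `(j*,k*) ≠ (j₀,K)`, then
`|∑_k π_k p_{j₀,k} − 1|² ≥ h(K)` with `h(K) = 1/4` for `K ∈ {1,2,4}` and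
`h(K) = sin⁴(π/K)` for `K ≥ 8`. -/
theorem softmax_section_error_bound (K : ℕ) (hK : ∃ m : ℕ, K = 2 ^ m)
    (M : ℕ) (hM : 1 ≤ M) (a : Fin M → ℕ → ℝ) (j0 : Fin M)
    (p : Fin M → ℕ → ℝ)
    (hp : ∀ j k, p j k =
      Real.exp (a j k) / ∑ j' : Fin M, ∑ k' ∈ Finset.Icc 1 K, Real.exp (a j' k'))
    (hdom : ∃ js : Fin M, ∃ ks ∈ Finset.Icc 1 K,
      (js, ks) ≠ (j0, K) ∧ a j0 K ≤ a js ks) :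
    ((K = 1 ∨ K = 2 ∨ K = 4) →
        (1 : ℝ) / 4 ≤ ‖(∑ k ∈ Finset.Icc 1 K, psk K k * (p j0 k : ℂ)) - 1‖ ^ 2) ∧
    (8 ≤ K →
        Real.sin (Real.pi / K) ^ 4
          ≤ ‖(∑ k ∈ Finset.Icc 1 K, psk K k * (p j0 k : ℂ)) - 1‖ ^ 2) := by
  constructor
  · intro hcase
    have hK1 : 1 ≤ K := by rcases hcase with rfl | rfl | rfl <;> norm_num
    have hre : ∀ k ∈ Finset.Icc 1 K, k ≠ K → (psk K k).re ≤ 0 := by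
      intro k hk hkne
      rw [Finset.mem_Icc] at hk
      rw [psk_re]
      rcases hcase with rfl | rfl | rfl
      · omega
      · have : k = 1 := by omega
        subst this
        norm_num [Real.cos_pi]
      · obtain ⟨hka, hkb⟩ := hk
        interval_cases k
        · push_cast
          rw [show 2 * Real.pi * 1 / (4:ℝ) = Real.pi / 2 by ring, Real.cos_pi_div_two]
        · push_cast
          rw [show 2 * Real.pi * 2 / (4:ℝ) = Real.pi by ring, Real.cos_pi]; norm_num
        · push_cast
          rw [show 2 * Real.pi * 3 / (4:ℝ) = Real.pi / 2 + Real.pi by ring,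
            Real.cos_add_pi, Real.cos_pi_div_two]
          norm_num
        · omega
    have := key K hK1 M hM a j0 p hp hdom 0 le_rfl (by norm_num) hre
    calc (1:ℝ)/4 = ((1 - 0)/2)^2 := by norm_num
      _ ≤ _ := this
  · intro h8
    have hK1 : 1 ≤ K := by omega
    have hK0 : (0:ℝ) < K := by positivity
    have hπ := Real.pi_pos
    set c : ℝ := Real.cos (2 * Real.pi / K) with hc_def
    have hc0 : 0 ≤ c := by
      apply Real.cos_nonneg_of_mem_Icc
      constructor
      · have h0 : (0:ℝ) ≤ 2 * Real.pi / K := by positivity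
        linarith
      · rw [div_le_iff₀ hK0]
        have : (8:ℝ) ≤ K := by exact_mod_cast h8
        nlinarith
    have hc1 : c ≤ 1 := Real.cos_le_one _
    have hre : ∀ k ∈ Finset.Icc 1 K, k ≠ K → (psk K k).re ≤ c := by
      intro k hk hkne
      rw [Finset.mem_Icc] at hk
      rw [psk_re]
      by_cases h2k : 2 * k ≤ K
      · exact cos_aux K k hk.1 h2k
      · push_neg at h2k
        have hkK : k < K := lt_of_le_of_ne hk.2 hkne
        have heq : Real.cos (2 * Real.pi * k / K) = Real.cos (2 * Real.pi * (K - k : ℕ) / K) := by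
          have hcast : ((K - k : ℕ) : ℝ) = (K : ℝ) - k := by
            rw [Nat.cast_sub hk.2]
          rw [hcast]
          have harg : 2 * Real.pi * ((K:ℝ) - k) / K = 2 * Real.pi - 2 * Real.pi * k / K := by
            field_simp
          rw [harg, Real.cos_sub, Real.cos_two_pi, Real.sin_two_pi]
          ring
        rw [heq]
        exact cos_aux K (K - k) (by omega) (by omega)
    have hkey := key K hK1 M hM a j0 p hp hdom c hc0 hc1 hre
    have hcos2 : c = 2 * Real.cos (Real.pi / K) ^ 2 - 1 := by
      rw [hc_def, show 2 * Real.pi / (K:ℝ) = 2 * (Real.pi / K) by ring, Real.cos_two_mul]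
    have hsin : Real.sin (Real.pi / K) ^ 2 = 1 - Real.cos (Real.pi / K) ^ 2 :=
      Real.sin_sq _
    have heq : ((1 - c) / 2) ^ 2 = Real.sin (Real.pi / K) ^ 4 := by
      rw [hcos2]
      calc ((1 - (2 * Real.cos (Real.pi / K) ^ 2 - 1)) / 2) ^ 2
          = (1 - Real.cos (Real.pi / K) ^ 2) ^ 2 := by ring
        _ = (Real.sin (Real.pi / K) ^ 2) ^ 2 := by rw [← hsin]
        _ = Real.sin (Real.pi / K) ^ 4 := by ring
    rw [← heq]
    exact hkey
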